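/- arXiv:2210.14080 — 3 statements merged into one kernel-verified Lean document; each statement's English description precedes it below -/
import Mathlib

section
/- The counterfactual error is bounded by the weighted factual error plus the integral probability metric between the weighted observational distribution and the product (fully randomized) distribution: ε_CF ≤ ε_F^w + IPM_G(W·p(X,T,Z), p(X)p(T)p(Z)), provided the loss function ℓ belongs to the function class G. -/
open MeasureTheory

/-- The counterfactual error is bounded by the weighted factual error plus the IPM
between the weighted observational distribution `W·p(X,T,Z)` and the product
(fully randomized) distribution `p(X)p(T)p(Z)`, provided the loss `ℓ` lies in `G`. -/
theorem counterfactual_error_bound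
    {𝒳 𝒯 𝒵 : Type*} [MeasurableSpace 𝒳] [MeasurableSpace 𝒯] [MeasurableSpace 𝒵]
    (μX : Measure 𝒳) (μT : Measure 𝒯) (μZ : Measure 𝒵)
    [SigmaFinite μX] [SigmaFinite μT] [SigmaFinite μZ]
    (pJoint : 𝒳 × 𝒯 × 𝒵 → ℝ) (pX : 𝒳 → ℝ) (pT : 𝒯 → ℝ) (pZ : 𝒵 → ℝ)
    (W : 𝒳 × 𝒯 × 𝒵 → ℝ) (ℓ : 𝒳 × 𝒯 × 𝒵 → ℝ)
    (G : Set (𝒳 × 𝒯 × 𝒵 → ℝ))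
    (hW_nonneg : ∀ v, 0 ≤ W v)
    (hℓ_nonneg : ∀ v, 0 ≤ ℓ v)
    (hℓG : ℓ ∈ G)
    (hW_norm : ∫ v, W v * pJoint v ∂(μX.prod (μT.prod μZ)) = 1)
    (hInt_w : Integrable (fun v => ℓ v * W v * pJoint v) (μX.prod (μT.prod μZ)))
    (hInt_cf : Integrable (fun v => ℓ v * (pX v.1 * pT v.2.1 * pZ v.2.2))
      (μX.prod (μT.prod μZ)))
    (hBdd : BddAbove {r : ℝ | ∃ g ∈ G,
      r = |∫ v, g v * (W v * pJoint v) ∂(μX.prod (μT.prod μZ))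
            - ∫ v, g v * (pX v.1 * pT v.2.1 * pZ v.2.2) ∂(μX.prod (μT.prod μZ))|}) :
    -- ε_CF ≤ ε_F^w + IPM_G(W·p(X,T,Z), p(X)p(T)p(Z))
    ∫ v, ℓ v * (pX v.1 * pT v.2.1 * pZ v.2.2) ∂(μX.prod (μT.prod μZ))
      ≤ (∫ v, ℓ v * W v * pJoint v ∂(μX.prod (μT.prod μZ)))
        + sSup {r : ℝ | ∃ g ∈ G,
            r = |∫ v, g v * (W v * pJoint v) ∂(μX.prod (μT.prod μZ))
                  - ∫ v, g v * (pX v.1 * pT v.2.1 * pZ v.2.2) ∂(μX.prod (μT.prod μZ))|} := by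
  set μ := μX.prod (μT.prod μZ)
  have hmem : |∫ v, ℓ v * (W v * pJoint v) ∂μ
      - ∫ v, ℓ v * (pX v.1 * pT v.2.1 * pZ v.2.2) ∂μ| ∈
      {r : ℝ | ∃ g ∈ G, r = |∫ v, g v * (W v * pJoint v) ∂μ
        - ∫ v, g v * (pX v.1 * pT v.2.1 * pZ v.2.2) ∂μ|} := ⟨ℓ, hℓG, rfl⟩
  have hle := le_csSup hBdd hmem
  have heq : ∫ v, ℓ v * (W v * pJoint v) ∂μ = ∫ v, ℓ v * W v * pJoint v ∂μ := by
    simp only [mul_assoc]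
  rw [heq] at hle
  have h2 : ∫ v, ℓ v * (pX v.1 * pT v.2.1 * pZ v.2.2) ∂μ
      - ∫ v, ℓ v * W v * pJoint v ∂μ ≤
      |∫ v, ℓ v * W v * pJoint v ∂μ - ∫ v, ℓ v * (pX v.1 * pT v.2.1 * pZ v.2.2) ∂μ| := by
    rw [abs_sub_comm]
    exact le_abs_self _
  linarith
end

section
/- The error in treatment-effect estimation between two treatment/exposure configurations is bounded by twice the sum of the individual counterfactual errors minus the noise variances: ε_{(t₁,z₁),(t₂,z₂)}(f) ≤ 2(ε_CF(t₁,z₁) − σ_{Y(t₁,z₁)}) + 2(ε_CF(t₂,z₂) − σ_{Y(t₂,z₂)}). -/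
open MeasureTheory

/-- The treatment-effect estimation error between two treatment/exposure
configurations is bounded by twice the sum of the individual counterfactual errors
minus the noise variances:
`ε_{(t₁,z₁),(t₂,z₂)}(f) ≤ 2(ε_CF(t₁,z₁) − σ_{Y(t₁,z₁)}) + 2(ε_CF(t₂,z₂) − σ_{Y(t₂,z₂)})`. -/
theorem effect_error_le_two_cf_errors
    {𝒳 𝒯 𝒵 : Type*} [MeasurableSpace 𝒳]
    (μ : Measure 𝒳) (ν : Measure ℝ) [SigmaFinite μ] [SigmaFinite ν]
    (t₁ t₂ : 𝒯) (z₁ z₂ : 𝒵)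
    (p : 𝒳 → ℝ) (pcond : 𝒳 → 𝒯 → 𝒵 → ℝ → ℝ)
    (f m : 𝒳 → 𝒯 → 𝒵 → ℝ)
    (hp_nonneg : ∀ x, 0 ≤ p x)
    -- bias–variance decomposition at (t₁,z₁) and (t₂,z₂)
    (hdecomp₁ : ∫ x, (∫ y, (y - f x t₁ z₁) ^ 2 * pcond x t₁ z₁ y ∂ν) * p x ∂μ
      = (∫ x, (f x t₁ z₁ - m x t₁ z₁) ^ 2 * p x ∂μ)
        + ∫ x, (∫ y, (m x t₁ z₁ - y) ^ 2 * pcond x t₁ z₁ y ∂ν) * p x ∂μ)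
    (hdecomp₂ : ∫ x, (∫ y, (y - f x t₂ z₂) ^ 2 * pcond x t₂ z₂ y ∂ν) * p x ∂μ
      = (∫ x, (f x t₂ z₂ - m x t₂ z₂) ^ 2 * p x ∂μ)
        + ∫ x, (∫ y, (m x t₂ z₂ - y) ^ 2 * pcond x t₂ z₂ y ∂ν) * p x ∂μ)
    (hInt₁ : Integrable (fun x => (f x t₁ z₁ - m x t₁ z₁) ^ 2 * p x) μ)
    (hInt₂ : Integrable (fun x => (f x t₂ z₂ - m x t₂ z₂) ^ 2 * p x) μ)
    (hMeas : AEStronglyMeasurable (fun x => (f x t₁ z₁ - f x t₂ z₂ - m x t₁ z₁ + m x t₂ z₂) ^ 2 * p x) μ) :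
    ∫ x, (f x t₁ z₁ - f x t₂ z₂ - (m x t₁ z₁ - m x t₂ z₂)) ^ 2 * p x ∂μ
      ≤ 2 * ((∫ x, (∫ y, (y - f x t₁ z₁) ^ 2 * pcond x t₁ z₁ y ∂ν) * p x ∂μ)
              - ∫ x, (∫ y, (m x t₁ z₁ - y) ^ 2 * pcond x t₁ z₁ y ∂ν) * p x ∂μ)
        + 2 * ((∫ x, (∫ y, (y - f x t₂ z₂) ^ 2 * pcond x t₂ z₂ y ∂ν) * p x ∂μ)
              - ∫ x, (∫ y, (m x t₂ z₂ - y) ^ 2 * pcond x t₂ z₂ y ∂ν) * p x ∂μ) := by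
  have h1 : (∫ x, (∫ y, (y - f x t₁ z₁) ^ 2 * pcond x t₁ z₁ y ∂ν) * p x ∂μ)
      - (∫ x, (∫ y, (m x t₁ z₁ - y) ^ 2 * pcond x t₁ z₁ y ∂ν) * p x ∂μ)
      = ∫ x, (f x t₁ z₁ - m x t₁ z₁) ^ 2 * p x ∂μ := by
    rw [hdecomp₁]; ring
  have h2 : (∫ x, (∫ y, (y - f x t₂ z₂) ^ 2 * pcond x t₂ z₂ y ∂ν) * p x ∂μ)
      - (∫ x, (∫ y, (m x t₂ z₂ - y) ^ 2 * pcond x t₂ z₂ y ∂ν) * p x ∂μ)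
      = ∫ x, (f x t₂ z₂ - m x t₂ z₂) ^ 2 * p x ∂μ := by
    rw [hdecomp₂]; ring
  rw [h1, h2]
  have key : ∫ x, (f x t₁ z₁ - f x t₂ z₂ - (m x t₁ z₁ - m x t₂ z₂)) ^ 2 * p x ∂μ
      ≤ ∫ x, (2 * ((f x t₁ z₁ - m x t₁ z₁) ^ 2 * p x)
              + 2 * ((f x t₂ z₂ - m x t₂ z₂) ^ 2 * p x)) ∂μ := by
    refine integral_mono_of_nonneg ?_ ((hInt₁.const_mul 2).add (hInt₂.const_mul 2)) ?_
    · filter_upwards with x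
      exact mul_nonneg (sq_nonneg _) (hp_nonneg x)
    · filter_upwards with x
      have h := sq_nonneg ((f x t₁ z₁ - m x t₁ z₁) + (f x t₂ z₂ - m x t₂ z₂))
      nlinarith [hp_nonneg x, sq_nonneg (f x t₁ z₁ - m x t₁ z₁ - (f x t₂ z₂ - m x t₂ z₂))]
  calc _ ≤ _ := key
    _ = 2 * (∫ x, (f x t₁ z₁ - m x t₁ z₁) ^ 2 * p x ∂μ)
        + 2 * (∫ x, (f x t₂ z₂ - m x t₂ z₂) ^ 2 * p x ∂μ) := by
      rw [integral_add (hInt₁.const_mul 2) (hInt₂.const_mul 2),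
        MeasureTheory.integral_const_mul, MeasureTheory.integral_const_mul]
end

section
/- The combined generalization bound for treatment effect estimation holds: ε_{(t₁,z₁),(t₂,z₂)}(f) ≤ 2ε_F^w(t₁,z₁) + 2·IPM_G(W₁·p(X | t₁,z₁)-weighted distribution, p(X)) + 2ε_F^w(t₂,z₂) + 2·IPM_G(W₂-weighted distribution, p(X)) − 2σ_{Y(t₁,z₁)} − 2σ_{Y(t₂,z₂)}, where the squared loss at each (t_k,z_k) lies in G. -/
open MeasureTheory

lemma sq_shift_integral (ν : Measure ℝ) (p : ℝ → ℝ) (c m : ℝ)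
    (h2 : Integrable (fun y => y ^ 2 * p y) ν)
    (h1 : Integrable (fun y => y * p y) ν)
    (h0 : Integrable (fun y => p y) ν)
    (hn : ∫ y, p y ∂ν = 1) (hm : ∫ y, y * p y ∂ν = m) :
    ∫ y, (y - c) ^ 2 * p y ∂ν = (∫ y, y ^ 2 * p y ∂ν) - 2 * c * m + c ^ 2 := by
  have : (fun y => (y - c) ^ 2 * p y)
      = fun y => (y ^ 2 * p y - (2 * c) * (y * p y)) + c ^ 2 * p y := by
    funext y; ring
  have hsub : Integrable (fun y => y ^ 2 * p y - 2 * c * (y * p y)) ν :=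
    h2.sub (h1.const_mul _)
  have hc : Integrable (fun y => c ^ 2 * p y) ν := h0.const_mul _
  rw [this]
  rw [integral_add hsub hc,
    integral_sub h2 (h1.const_mul (2*c)), MeasureTheory.integral_const_mul, MeasureTheory.integral_const_mul, hn, hm]
  ring


/-- Combined generalization bound for treatment-effect estimation:
`ε_{(t₁,z₁),(t₂,z₂)}(f) ≤ 2ε_F^w(t₁,z₁) + 2·IPM_G(W₁·p(X|t₁,z₁), p(X))
  + 2ε_F^w(t₂,z₂) + 2·IPM_G(W₂·p(X|t₂,z₂), p(X)) − 2σ_{Y(t₁,z₁)} − 2σ_{Y(t₂,z₂)}`,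
where the squared-error losses `ℓ(·,t_k,z_k)` belong to the class `G`. -/
theorem generalization_bound_effect_estimation
    {𝒳 : Type*} [MeasurableSpace 𝒳]
    (μ : Measure 𝒳) (ν : Measure ℝ) [SigmaFinite μ] [SigmaFinite ν]
    (pX : 𝒳 → ℝ)                       -- covariate density p(x)
    (pcond₁ pcond₂ : 𝒳 → ℝ)            -- conditional covariate densities p(x | t_k, z_k)
    (W₁ W₂ : 𝒳 → ℝ)                    -- weights W_k(x) = p(x)/p(x|t_k,z_k)
    (pY₁ pY₂ : 𝒳 → ℝ → ℝ)              -- conditional outcome densities p(y(t_k,z_k)|x)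
    (f₁ f₂ m₁ m₂ : 𝒳 → ℝ)              -- predictions and conditional means at (t_k,z_k)
    (ℓ₁ ℓ₂ : 𝒳 → ℝ)                    -- squared-error losses at (t_k,z_k)
    (G : Set (𝒳 → ℝ))
    (hpX_nonneg : ∀ x, 0 ≤ pX x)
    (hW₁ : ∀ x, W₁ x = pX x / pcond₁ x) (hW₂ : ∀ x, W₂ x = pX x / pcond₂ x)
    (hℓ₁ : ∀ x, ℓ₁ x = ∫ y, (y - f₁ x) ^ 2 * pY₁ x y ∂ν)
    (hℓ₂ : ∀ x, ℓ₂ x = ∫ y, (y - f₂ x) ^ 2 * pY₂ x y ∂ν)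
    (hℓ₁G : ℓ₁ ∈ G) (hℓ₂G : ℓ₂ ∈ G)
    -- conditional outcome densities are normalized with conditional means m_k
    (hnorm₁ : ∀ x, ∫ y, pY₁ x y ∂ν = 1) (hnorm₂ : ∀ x, ∫ y, pY₂ x y ∂ν = 1)
    (hmean₁ : ∀ x, ∫ y, y * pY₁ x y ∂ν = m₁ x) (hmean₂ : ∀ x, ∫ y, y * pY₂ x y ∂ν = m₂ x)
    (hIntY₁ : ∀ x, Integrable (fun y => y ^ 2 * pY₁ x y) ν)
    (hIntY₂ : ∀ x, Integrable (fun y => y ^ 2 * pY₂ x y) ν)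
    (hIntY₁' : ∀ x, Integrable (fun y => y * pY₁ x y) ν)
    (hIntY₂' : ∀ x, Integrable (fun y => y * pY₂ x y) ν)
    (hIntY₁'' : ∀ x, Integrable (fun y => pY₁ x y) ν)
    (hIntY₂'' : ∀ x, Integrable (fun y => pY₂ x y) ν)
    -- integrability over covariates
    (hInt_cf₁ : Integrable (fun x => ℓ₁ x * pX x) μ)
    (hInt_cf₂ : Integrable (fun x => ℓ₂ x * pX x) μ)
    (hInt_bias₁ : Integrable (fun x => (f₁ x - m₁ x) ^ 2 * pX x) μ)
    (hInt_bias₂ : Integrable (fun x => (f₂ x - m₂ x) ^ 2 * pX x) μ)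
    (hInt_var₁ : Integrable (fun x => (∫ y, (m₁ x - y) ^ 2 * pY₁ x y ∂ν) * pX x) μ)
    (hInt_var₂ : Integrable (fun x => (∫ y, (m₂ x - y) ^ 2 * pY₂ x y ∂ν) * pX x) μ)
    (hInt_w₁ : Integrable (fun x => ℓ₁ x * W₁ x * pcond₁ x) μ)
    (hInt_w₂ : Integrable (fun x => ℓ₂ x * W₂ x * pcond₂ x) μ)
    (hMeas : AEStronglyMeasurable (fun x => (f₁ x - f₂ x - m₁ x + m₂ x) ^ 2 * pX x) μ)
    (hIntG : ∀ g ∈ G, Integrable (fun x => g x * (W₁ x * pcond₁ x)) μ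
      ∧ Integrable (fun x => g x * (W₂ x * pcond₂ x)) μ
      ∧ Integrable (fun x => g x * pX x) μ)
    (hBdd₁ : BddAbove {r : ℝ | ∃ g ∈ G,
      r = |(∫ x, g x * (W₁ x * pcond₁ x) ∂μ) - ∫ x, g x * pX x ∂μ|})
    (hBdd₂ : BddAbove {r : ℝ | ∃ g ∈ G,
      r = |(∫ x, g x * (W₂ x * pcond₂ x) ∂μ) - ∫ x, g x * pX x ∂μ|}) :
    ∫ x, (f₁ x - f₂ x - m₁ x + m₂ x) ^ 2 * pX x ∂μ
      ≤ 2 * (∫ x, ℓ₁ x * W₁ x * pcond₁ x ∂μ)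
        + 2 * sSup {r : ℝ | ∃ g ∈ G,
            r = |(∫ x, g x * (W₁ x * pcond₁ x) ∂μ) - ∫ x, g x * pX x ∂μ|}
        + 2 * (∫ x, ℓ₂ x * W₂ x * pcond₂ x ∂μ)
        + 2 * sSup {r : ℝ | ∃ g ∈ G,
            r = |(∫ x, g x * (W₂ x * pcond₂ x) ∂μ) - ∫ x, g x * pX x ∂μ|}
        - 2 * (∫ x, (∫ y, (m₁ x - y) ^ 2 * pY₁ x y ∂ν) * pX x ∂μ)
        - 2 * (∫ x, (∫ y, (m₂ x - y) ^ 2 * pY₂ x y ∂ν) * pX x ∂μ) := by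
  -- pointwise decomposition of losses
  have hdec₁ : ∀ x, ℓ₁ x = (f₁ x - m₁ x) ^ 2 + ∫ y, (m₁ x - y) ^ 2 * pY₁ x y ∂ν := by
    intro x
    have h1 := sq_shift_integral ν (pY₁ x) (f₁ x) (m₁ x) (hIntY₁ x) (hIntY₁' x)
      (hIntY₁'' x) (hnorm₁ x) (hmean₁ x)
    have h2 := sq_shift_integral ν (pY₁ x) (m₁ x) (m₁ x) (hIntY₁ x) (hIntY₁' x)
      (hIntY₁'' x) (hnorm₁ x) (hmean₁ x)
    have e1 : (fun y => (m₁ x - y) ^ 2 * pY₁ x y) = fun y => (y - m₁ x) ^ 2 * pY₁ x y := by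
      funext y; ring
    rw [hℓ₁ x, h1, e1, h2]; ring
  have hdec₂ : ∀ x, ℓ₂ x = (f₂ x - m₂ x) ^ 2 + ∫ y, (m₂ x - y) ^ 2 * pY₂ x y ∂ν := by
    intro x
    have h1 := sq_shift_integral ν (pY₂ x) (f₂ x) (m₂ x) (hIntY₂ x) (hIntY₂' x)
      (hIntY₂'' x) (hnorm₂ x) (hmean₂ x)
    have h2 := sq_shift_integral ν (pY₂ x) (m₂ x) (m₂ x) (hIntY₂ x) (hIntY₂' x)
      (hIntY₂'' x) (hnorm₂ x) (hmean₂ x)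
    have e1 : (fun y => (m₂ x - y) ^ 2 * pY₂ x y) = fun y => (y - m₂ x) ^ 2 * pY₂ x y := by
      funext y; ring
    rw [hℓ₂ x, h1, e1, h2]; ring
  set V₁ := ∫ x, (∫ y, (m₁ x - y) ^ 2 * pY₁ x y ∂ν) * pX x ∂μ with hV₁
  set V₂ := ∫ x, (∫ y, (m₂ x - y) ^ 2 * pY₂ x y ∂ν) * pX x ∂μ with hV₂
  -- counterfactual error splits into bias plus variance
  have hcf₁ : ∫ x, ℓ₁ x * pX x ∂μ = (∫ x, (f₁ x - m₁ x) ^ 2 * pX x ∂μ) + V₁ := by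
    have e : (fun x => ℓ₁ x * pX x)
        = fun x => (f₁ x - m₁ x) ^ 2 * pX x
            + (∫ y, (m₁ x - y) ^ 2 * pY₁ x y ∂ν) * pX x := by
      funext x; rw [hdec₁ x]; ring
    rw [e, integral_add hInt_bias₁ hInt_var₁]
  have hcf₂ : ∫ x, ℓ₂ x * pX x ∂μ = (∫ x, (f₂ x - m₂ x) ^ 2 * pX x ∂μ) + V₂ := by
    have e : (fun x => ℓ₂ x * pX x)
        = fun x => (f₂ x - m₂ x) ^ 2 * pX x
            + (∫ y, (m₂ x - y) ^ 2 * pY₂ x y ∂ν) * pX x := by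
      funext x; rw [hdec₂ x]; ring
    rw [e, integral_add hInt_bias₂ hInt_var₂]
  -- IPM step
  set S₁ := sSup {r : ℝ | ∃ g ∈ G,
      r = |(∫ x, g x * (W₁ x * pcond₁ x) ∂μ) - ∫ x, g x * pX x ∂μ|} with hS₁
  set S₂ := sSup {r : ℝ | ∃ g ∈ G,
      r = |(∫ x, g x * (W₂ x * pcond₂ x) ∂μ) - ∫ x, g x * pX x ∂μ|} with hS₂
  have hipm₁ : ∫ x, ℓ₁ x * pX x ∂μ ≤ (∫ x, ℓ₁ x * W₁ x * pcond₁ x ∂μ) + S₁ := by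
    have hmem : |(∫ x, ℓ₁ x * (W₁ x * pcond₁ x) ∂μ) - ∫ x, ℓ₁ x * pX x ∂μ|
        ∈ {r : ℝ | ∃ g ∈ G,
          r = |(∫ x, g x * (W₁ x * pcond₁ x) ∂μ) - ∫ x, g x * pX x ∂μ|} :=
      ⟨ℓ₁, hℓ₁G, rfl⟩
    have hle := le_csSup hBdd₁ hmem
    have e : (∫ x, ℓ₁ x * (W₁ x * pcond₁ x) ∂μ) = ∫ x, ℓ₁ x * W₁ x * pcond₁ x ∂μ := by
      congr 1; funext x; ring
    rw [e] at hle
    have := neg_abs_le ((∫ x, ℓ₁ x * W₁ x * pcond₁ x ∂μ) - ∫ x, ℓ₁ x * pX x ∂μ)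
    linarith [abs_nonneg ((∫ x, ℓ₁ x * W₁ x * pcond₁ x ∂μ) - ∫ x, ℓ₁ x * pX x ∂μ)]
  have hipm₂ : ∫ x, ℓ₂ x * pX x ∂μ ≤ (∫ x, ℓ₂ x * W₂ x * pcond₂ x ∂μ) + S₂ := by
    have hmem : |(∫ x, ℓ₂ x * (W₂ x * pcond₂ x) ∂μ) - ∫ x, ℓ₂ x * pX x ∂μ|
        ∈ {r : ℝ | ∃ g ∈ G,
          r = |(∫ x, g x * (W₂ x * pcond₂ x) ∂μ) - ∫ x, g x * pX x ∂μ|} :=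
      ⟨ℓ₂, hℓ₂G, rfl⟩
    have hle := le_csSup hBdd₂ hmem
    have e : (∫ x, ℓ₂ x * (W₂ x * pcond₂ x) ∂μ) = ∫ x, ℓ₂ x * W₂ x * pcond₂ x ∂μ := by
      congr 1; funext x; ring
    rw [e] at hle
    have := neg_abs_le ((∫ x, ℓ₂ x * W₂ x * pcond₂ x ∂μ) - ∫ x, ℓ₂ x * pX x ∂μ)
    linarith
  -- effect error bound via (a+b)^2 ≤ 2a² + 2b²
  have hpt : ∀ x, (f₁ x - f₂ x - m₁ x + m₂ x) ^ 2 * pX x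
      ≤ (2 * (f₁ x - m₁ x) ^ 2 + 2 * (f₂ x - m₂ x) ^ 2) * pX x := by
    intro x
    have h : (f₁ x - f₂ x - m₁ x + m₂ x) ^ 2
        ≤ 2 * (f₁ x - m₁ x) ^ 2 + 2 * (f₂ x - m₂ x) ^ 2 := by
      nlinarith [sq_nonneg ((f₁ x - m₁ x) + (f₂ x - m₂ x))]
    exact mul_le_mul_of_nonneg_right h (hpX_nonneg x)
  have hIntRHS : Integrable
      (fun x => (2 * (f₁ x - m₁ x) ^ 2 + 2 * (f₂ x - m₂ x) ^ 2) * pX x) μ := by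
    have e : (fun x => (2 * (f₁ x - m₁ x) ^ 2 + 2 * (f₂ x - m₂ x) ^ 2) * pX x)
        = fun x => 2 * ((f₁ x - m₁ x) ^ 2 * pX x) + 2 * ((f₂ x - m₂ x) ^ 2 * pX x) := by
      funext x; ring
    rw [e]
    exact (hInt_bias₁.const_mul 2).add (hInt_bias₂.const_mul 2)
  have hIntLHS : Integrable (fun x => (f₁ x - f₂ x - m₁ x + m₂ x) ^ 2 * pX x) μ := by
    refine hIntRHS.mono' hMeas ?_
    filter_upwards with x
    rw [Real.norm_eq_abs, abs_of_nonneg (mul_nonneg (sq_nonneg _) (hpX_nonneg x))]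
    exact hpt x
  have hmain : ∫ x, (f₁ x - f₂ x - m₁ x + m₂ x) ^ 2 * pX x ∂μ
      ≤ 2 * (∫ x, (f₁ x - m₁ x) ^ 2 * pX x ∂μ) + 2 * (∫ x, (f₂ x - m₂ x) ^ 2 * pX x ∂μ) := by
    calc ∫ x, (f₁ x - f₂ x - m₁ x + m₂ x) ^ 2 * pX x ∂μ
        ≤ ∫ x, (2 * (f₁ x - m₁ x) ^ 2 + 2 * (f₂ x - m₂ x) ^ 2) * pX x ∂μ :=
          integral_mono hIntLHS hIntRHS hpt
      _ = 2 * (∫ x, (f₁ x - m₁ x) ^ 2 * pX x ∂μ)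
          + 2 * (∫ x, (f₂ x - m₂ x) ^ 2 * pX x ∂μ) := by
          have e : (fun x => (2 * (f₁ x - m₁ x) ^ 2 + 2 * (f₂ x - m₂ x) ^ 2) * pX x)
              = fun x => 2 * ((f₁ x - m₁ x) ^ 2 * pX x)
                  + 2 * ((f₂ x - m₂ x) ^ 2 * pX x) := by
            funext x; ring
          rw [e, integral_add (hInt_bias₁.const_mul 2) (hInt_bias₂.const_mul 2),
            MeasureTheory.integral_const_mul, MeasureTheory.integral_const_mul]
  linarith
end
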